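/- Fix p ∈ ℕ, a symmetric p×p real matrix Σ, and a diagonal p×p real matrix D. Let G be the 2p×2p block matrix [[Σ, Σ−D], [Σ−D, Σ]]. For every subset S ⊆ {1,…,p}, let P_S be the 2p×2p permutation matrix that exchanges index j with index p+j for every j ∈ S and fixes all other indices. Then P_S · G · P_Sᵀ = G. -/

import Mathlib

open Matrix

/-- The permutation of `Fin p ⊕ Fin p` exchanging index `j` (i.e. `Sum.inl j`)
with index `p + j` (i.e. `Sum.inr j`) for every `j ∈ S`, fixing all other indices. -/
def swapPerm {p : ℕ} (S : Finset (Fin p)) : Equiv.Perm (Fin p ⊕ Fin p) :=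
  Function.Involutive.toPerm
    (fun x => match x with
      | Sum.inl j => if j ∈ S then Sum.inr j else Sum.inl j
      | Sum.inr j => if j ∈ S then Sum.inl j else Sum.inr j)
    (by intro x; cases x <;> dsimp only <;> split_ifs <;> simp_all)

/-- The permutation matrix of `swapPerm S`. -/
def swapPermMatrix {p : ℕ} (S : Finset (Fin p)) :
    Matrix (Fin p ⊕ Fin p) (Fin p ⊕ Fin p) ℝ :=
  Matrix.of fun i j => if swapPerm S i = j then (1 : ℝ) else 0

lemma entry_aux {n : Type*} [Fintype n] [DecidableEq n] (σ : Equiv.Perm n)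
    (A : Matrix n n ℝ) (i j : n) :
    ((Matrix.of fun i j => if σ i = j then (1:ℝ) else 0) * A *
      (Matrix.of fun i j => if σ i = j then (1:ℝ) else 0)ᵀ) i j = A (σ i) (σ j) := by
  simp [Matrix.mul_apply, ite_mul, mul_ite, Finset.sum_ite_eq, Finset.sum_ite_eq']

/-- The knockoff joint covariance matrix `G = [[Σ, Σ−D], [Σ−D, Σ]]` is invariant
under conjugation by any swap permutation matrix: `P_S G P_Sᵀ = G`. -/
theorem swapPermMatrix_conj_knockoffGram
    {p : ℕ} (Sg D : Matrix (Fin p) (Fin p) ℝ)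
    (hSg : Sg.IsSymm) (hD : D.IsDiag) (S : Finset (Fin p)) :
    swapPermMatrix S * Matrix.fromBlocks Sg (Sg - D) (Sg - D) Sg *
      (swapPermMatrix S)ᵀ = Matrix.fromBlocks Sg (Sg - D) (Sg - D) Sg := by
  have hSg' : ∀ a b, Sg a b = Sg b a := fun a b => by
    rw [← Matrix.transpose_apply Sg b a, hSg]
  have hDsub : ∀ a b : Fin p, (Sg - D) a b = Sg a b ∨ a = b := by
    intro a b
    rcases eq_or_ne a b with rfl | hab
    · exact Or.inr rfl
    · left; simp [hD hab]
  ext i j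
  rw [show swapPermMatrix S = (Matrix.of fun i j => if swapPerm S i = j then (1:ℝ) else 0) from rfl,
    entry_aux]
  rcases i with a | a <;> rcases j with b | b <;>
    simp only [swapPerm, Function.Involutive.toPerm, Equiv.coe_fn_mk] <;>
    split_ifs with h1 h2 <;>
    simp only [Matrix.fromBlocks_apply₁₁, Matrix.fromBlocks_apply₁₂,
      Matrix.fromBlocks_apply₂₁, Matrix.fromBlocks_apply₂₂] <;>
    first
      | rfl
      | (apply hSg')
      | (rcases hDsub a b with h | rfl
         · exact h.symm
         · exact absurd h1 (by tauto))
      | (rcases hDsub a b with h | rfl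
         · exact h
         · exact absurd h1 (by tauto))
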